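/- For n ≥ 2, let S₀,…,S_{n-1} be the binary strings with Sᵢ the little-endian binary representation of i padded to length ⌈log₂ n⌉. Then a pair (i,j) with i < j is interesting (meaning LCP(Sᵢ,Sₗ) < LCP(Sᵢ,Sⱼ) for all i < ℓ < j) if and only if j - i is a power of 2. Consequently, the number of interesting pairs is Ω(n log n). -/

import Mathlib

def lcpLen {α : Type*} [DecidableEq α] : List α → List α → ℕ
  | a :: s, b :: t => if a = b then lcpLen s t + 1 else 0
  | _, _ => 0

/-- A pair `(i,j)` is interesting for the tuple `S` if `i < j` and every index strictly
between `i` and `j` has a smaller LCP with `Sᵢ` than `Sⱼ` does. -/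
def Interesting {α : Type*} [DecidableEq α] (S : ℕ → List α) (i j : ℕ) : Prop :=
  i < j ∧ ∀ l, i < l → l < j → lcpLen (S i) (S l) < lcpLen (S i) (S j)

/-- `Sbin n i` is the little-endian binary representation of `i`,
padded with zeros to length `⌈log₂ n⌉`. -/
def Sbin (n i : ℕ) : List ℕ :=
  (List.range (Nat.clog 2 n)).map (fun k => i / 2 ^ k % 2)

lemma lcp_map_range : ∀ (L : ℕ) (f g : ℕ → ℕ) (k : ℕ), k ≤ L →
    (∀ m < k, f m = g m) → (k = L ∨ f k ≠ g k) →
    lcpLen ((List.range L).map f) ((List.range L).map g) = k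
  | 0, f, g, k, hk, _, _ => by
    have hk0 : k = 0 := by omega
    subst hk0
    simp [lcpLen]
  | L + 1, f, g, k, hk, hagree, hdis => by
    rw [List.range_succ_eq_map, List.map_cons, List.map_cons, List.map_map, List.map_map]
    cases k with
    | zero =>
      have hne : f 0 ≠ g 0 := by
        rcases hdis with h | h
        · omega
        · exact h
      simp [lcpLen, hne]
    | succ k' =>
      have h0 : f 0 = g 0 := hagree 0 (Nat.succ_pos _)
      have hrec := lcp_map_range L (f ∘ Nat.succ) (g ∘ Nat.succ) k' (by omega)
        (fun m hm => hagree (m + 1) (by omega))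
        (by rcases hdis with h | h
            · left; omega
            · right; exact h)
      simp only [lcpLen, h0, if_pos rfl]
      simp [Function.comp_def] at hrec ⊢
      omega
    termination_by L => L

lemma digit_eq (i d k : ℕ) (h : 2 ^ (k + 1) ∣ d) :
    (i + d) / 2 ^ k % 2 = i / 2 ^ k % 2 := by
  obtain ⟨c, rfl⟩ := h
  have h2 : 2 ^ (k + 1) * c = 2 ^ k * (2 * c) := by ring
  rw [h2, Nat.add_mul_div_left _ _ (Nat.two_pow_pos k),
    Nat.add_mul_mod_self_left]

lemma digit_ne (i d k : ℕ) (h1 : 2 ^ k ∣ d) (h2 : ¬ 2 ^ (k + 1) ∣ d) :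
    (i + d) / 2 ^ k % 2 ≠ i / 2 ^ k % 2 := by
  obtain ⟨c, rfl⟩ := h1
  have hc : c % 2 = 1 := by
    rcases Nat.even_or_odd c with he | ho
    · exfalso; obtain ⟨c', rfl⟩ := he
      exact h2 ⟨c', by ring⟩
    · exact Nat.odd_iff.mp ho
  rw [Nat.add_mul_div_left _ _ (Nat.two_pow_pos k)]
  clear h2
  omega

lemma lcp_Sbin (n i d : ℕ) (hd : 0 < d) :
    lcpLen (Sbin n i) (Sbin n (i + d)) = min (Nat.clog 2 n) (d.factorization 2) := by
  unfold Sbin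
  apply lcp_map_range
  · exact min_le_left _ _
  · intro m hm
    have hdvd : 2 ^ (m + 1) ∣ d :=
      (Nat.Prime.pow_dvd_iff_le_factorization Nat.prime_two hd.ne').2 (by omega)
    exact (digit_eq i d m hdvd).symm
  · rcases le_or_gt (Nat.clog 2 n) (d.factorization 2) with h | h
    · left; omega
    · right
      have hmin : min (Nat.clog 2 n) (d.factorization 2) = d.factorization 2 := by omega
      rw [hmin]
      have h1 : 2 ^ (d.factorization 2) ∣ d :=
        (Nat.Prime.pow_dvd_iff_le_factorization Nat.prime_two hd.ne').2 le_rfl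
      have h2 : ¬ 2 ^ (d.factorization 2 + 1) ∣ d := fun hh =>
        absurd ((Nat.Prime.pow_dvd_iff_le_factorization Nat.prime_two hd.ne').1 hh) (by omega)
      exact fun hh => digit_ne i d (d.factorization 2) h1 h2 hh.symm

lemma fact_pow (t : ℕ) : ((2 : ℕ) ^ t).factorization 2 = t := by
  simp [Nat.Prime.factorization_pow Nat.prime_two]

lemma interesting_iff (n i j : ℕ) (hn : 2 ≤ n) (hij : i < j) (hjn : j < n) :
    Interesting (Sbin n) i j ↔ ∃ t, j - i = 2 ^ t := by
  have hnL : n ≤ 2 ^ Nat.clog 2 n := Nat.le_pow_clog (by norm_num) n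
  constructor
  · intro hint
    by_contra hnp
    push_neg at hnp
    have hd0 : 0 < j - i := by omega
    have h1 : 2 ^ Nat.log 2 (j - i) ≤ j - i := Nat.pow_log_le_self 2 hd0.ne'
    have h2 : 2 ^ Nat.log 2 (j - i) < j - i :=
      lt_of_le_of_ne h1 (fun hh => hnp (Nat.log 2 (j - i)) hh.symm)
    have hlcp1 : lcpLen (Sbin n i) (Sbin n (i + 2 ^ Nat.log 2 (j - i))) =
        min (Nat.clog 2 n) (Nat.log 2 (j - i)) := by
      rw [lcp_Sbin n i _ (Nat.two_pow_pos _), fact_pow]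
    have hlcp2 : lcpLen (Sbin n i) (Sbin n j) =
        min (Nat.clog 2 n) ((j - i).factorization 2) := by
      have hji : j = i + (j - i) := by omega
      rw [hji, lcp_Sbin n i (j - i) hd0]
      rw [← hji]
    have hvt : (j - i).factorization 2 ≤ Nat.log 2 (j - i) := by
      have hdvd : 2 ^ ((j - i).factorization 2) ∣ (j - i) := Nat.ordProj_dvd (j - i) 2
      have hle := Nat.le_of_dvd hd0 hdvd
      exact (Nat.le_log_iff_pow_le (by norm_num) hd0.ne').2 hle
    have hcon := hint.2 (i + 2 ^ Nat.log 2 (j - i))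
      (by have := Nat.two_pow_pos (Nat.log 2 (j - i)); omega)
      (by omega)
    rw [hlcp1, hlcp2] at hcon
    omega
  · rintro ⟨t, ht⟩
    have hpt : 0 < 2 ^ t := Nat.two_pow_pos t
    have hj : j = i + 2 ^ t := by omega
    have htL : t < Nat.clog 2 n := by
      have hlt : 2 ^ t < 2 ^ Nat.clog 2 n := by omega
      exact (Nat.pow_lt_pow_iff_right (by norm_num)).1 hlt
    refine ⟨hij, fun l hl1 hl2 => ?_⟩
    have he0 : 0 < l - i := by omega
    have hlcp1 : lcpLen (Sbin n i) (Sbin n l) =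
        min (Nat.clog 2 n) ((l - i).factorization 2) := by
      have heq : l = i + (l - i) := by omega
      rw [heq, lcp_Sbin n i (l - i) he0, ← heq]
    have hlcp2 : lcpLen (Sbin n i) (Sbin n j) = min (Nat.clog 2 n) t := by
      rw [hj, lcp_Sbin n i _ hpt, fact_pow]
    have hvt : (l - i).factorization 2 < t := by
      have hdvd : 2 ^ ((l - i).factorization 2) ∣ (l - i) := Nat.ordProj_dvd (l - i) 2
      have hle : 2 ^ ((l - i).factorization 2) ≤ l - i := Nat.le_of_dvd he0 hdvd
      have hlt : 2 ^ ((l - i).factorization 2) < 2 ^ t := by omega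
      exact (Nat.pow_lt_pow_iff_right (by norm_num)).1 hlt
    rw [hlcp1, hlcp2]
    omega

theorem binary_interesting_iff_power_of_two (n : ℕ) (hn : 2 ≤ n) :
    (∀ i j, i < j → j < n → (Interesting (Sbin n) i j ↔ ∃ t, j - i = 2 ^ t)) ∧
    Nat.log 2 n * (n / 2) ≤ {p : ℕ × ℕ | p.2 < n ∧ Interesting (Sbin n) p.1 p.2}.ncard := by
  constructor
  · exact fun i j hij hjn => interesting_iff n i j hn hij hjn
  · set S : Set (ℕ × ℕ) := {p : ℕ × ℕ | p.2 < n ∧ Interesting (Sbin n) p.1 p.2} with hS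
    set F : ℕ × ℕ → ℕ × ℕ := fun q => (q.2, q.2 + 2 ^ q.1) with hF
    set D : Finset (ℕ × ℕ) := Finset.range (Nat.log 2 n) ×ˢ Finset.range (n / 2) with hD
    set T : Finset (ℕ × ℕ) := D.image F with hT
    have hpow : ∀ t < Nat.log 2 n, 2 ^ (t + 1) ≤ n := by
      intro t htl
      calc 2 ^ (t + 1) ≤ 2 ^ (Nat.log 2 n) := Nat.pow_le_pow_right (by norm_num) (by omega)
        _ ≤ n := Nat.pow_log_le_self 2 (by omega)
    have hmem : ∀ q ∈ D, F q ∈ S := by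
      rintro ⟨t, m⟩ hq
      rw [hD, Finset.mem_product, Finset.mem_range, Finset.mem_range] at hq
      have h1 : 2 ^ (t + 1) ≤ n := hpow t hq.1
      have h2 : 2 ^ t ≤ n / 2 := by
        have h3 : 2 ^ (t + 1) = 2 * 2 ^ t := by ring
        omega
      have hjn : m + 2 ^ t < n := by omega
      refine ⟨hjn, ?_⟩
      rw [show F (t, m) = (m, m + 2 ^ t) from rfl]
      have hpt : 0 < 2 ^ t := Nat.two_pow_pos t
      rw [interesting_iff n m (m + 2 ^ t) hn (by omega) hjn]
      exact ⟨t, by rw [Nat.add_sub_cancel_left]⟩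
    have hinj : Set.InjOn F (↑D : Set (ℕ × ℕ)) := by
      rintro ⟨t1, m1⟩ _ ⟨t2, m2⟩ _ heq
      simp only [hF, Prod.mk.injEq] at heq
      obtain ⟨h1, h2⟩ := heq
      have hp : (2 : ℕ) ^ t1 = 2 ^ t2 := by omega
      have ht : t1 = t2 := Nat.pow_right_injective (le_refl 2) hp
      simp [ht, h1]
    have hcard : T.card = Nat.log 2 n * (n / 2) := by
      rw [hT, Finset.card_image_of_injOn hinj, hD, Finset.card_product,
        Finset.card_range, Finset.card_range]
    have hsub : (↑T : Set (ℕ × ℕ)) ⊆ S := by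
      intro p hp
      rw [hT, Finset.coe_image] at hp
      obtain ⟨q, hq, rfl⟩ := hp
      exact hmem q hq
    have hSfin : S.Finite := by
      apply Set.Finite.subset ((Set.finite_Iio n).prod (Set.finite_Iio n))
      rintro ⟨a, b⟩ ⟨h1, h2⟩
      exact ⟨lt_trans h2.1 h1, h1⟩
    calc Nat.log 2 n * (n / 2) = T.card := hcard.symm
      _ = (↑T : Set (ℕ × ℕ)).ncard := (Set.ncard_coe_finset T).symm
      _ ≤ S.ncard := Set.ncard_le_ncard hsub hSfin
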